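/- arXiv:0712.0901 — 4 statements merged into one kernel-verified Lean document; each statement's English description precedes it below -/
import Mathlib

section
/- Lemma 4. Fix constants 0 < ε0 ≤ ε1, δ0 ≤ 1 ≤ M0 with δ0 ≤ M0/16. Assume: (B1) λ_min(Ṽ_i) ≥ 2δ0 and λ_max(Ṽ_i) ≤ M0/2 for all 1 ≤ i ≤ n, where Ṽ_i is the MoM covariance matrix computed at the true β; (B2) n(j,k,l)^{-1} Σ_{i∈I(j,k,l)} (1 + s_{ij}) |Y_{ik} − μ_{ik}| ≤ ε0^{-1/2} for all 1 ≤ l ≤ L_{jk}, (j,k) ∈ D; and (C1) b²(2ε0^{1/2} + L1²ε0²) ≤ δ0, where L1 = max_{i≤n, j∈J_i} s_{ij}. Then for any β̂ with |β̂ − β| ≤ ε0, the MoM covariance matrices V̂_i computed at β̂ satisfy λ_min(V̂_i) ≥ δ0 and λ_max(V̂_i) ≤ (9/16) M0 for all 1 ≤ i ≤ n. -/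
open Metric Finset
open scoped Matrix

/-- Mean value bound: a gradient bound on a closed ball gives a Lipschitz-type bound. -/
private lemma mvt_abs_le {p : ℕ} {β βh : EuclideanSpace ℝ (Fin p)} {ε₀ ε₁ : ℝ}
    (hε₀ : 0 ≤ ε₀) (hε₀₁ : ε₀ ≤ ε₁)
    {f : EuclideanSpace ℝ (Fin p) → ℝ}
    {Gf : EuclideanSpace ℝ (Fin p) → EuclideanSpace ℝ (Fin p)} {c : ℝ}
    (hG : ∀ x ∈ closedBall β ε₁, HasGradientAt f (Gf x) x)
    (hc : ∀ x ∈ closedBall β ε₁, ‖Gf x‖ ≤ c)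
    (hβh : ‖βh - β‖ ≤ ε₀) : |f βh - f β| ≤ c * ε₀ := by
  have hβmem : β ∈ closedBall β ε₁ := mem_closedBall_self (hε₀.trans hε₀₁)
  have hβhmem : βh ∈ closedBall β ε₁ := by
    rw [mem_closedBall, dist_eq_norm]; exact hβh.trans hε₀₁
  have hc0 : 0 ≤ c := (norm_nonneg _).trans (hc β hβmem)
  have key := (convex_closedBall β ε₁).norm_image_sub_le_of_norm_hasFDerivWithin_le
    (f' := fun x => (InnerProductSpace.toDual ℝ _) (Gf x))
    (fun x hx => ((hG x hx).hasFDerivAt).hasFDerivWithinAt)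
    (fun x hx => by
      rw [LinearIsometryEquiv.norm_map]; exact hc x hx) hβmem hβhmem
  rw [Real.norm_eq_abs] at key
  exact key.trans (mul_le_mul_of_nonneg_left hβh hc0)

/-- Quadratic form bound from an entrywise bound. -/
private lemma quadform_abs_le {m : Type*} [Fintype m] {M : Matrix m m ℝ} {e : ℝ}
    (he : 0 ≤ e) (hM : ∀ j k, |M j k| ≤ e) (x : m → ℝ) :
    |x ⬝ᵥ M.mulVec x| ≤ e * (Fintype.card m) * ∑ j, x j ^ 2 := by
  have habs : ∀ j, |M.mulVec x j| ≤ e * ∑ k, |x k| := by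
    intro j
    calc |M.mulVec x j| = |∑ k, M j k * x k| := by
          simp [Matrix.mulVec, dotProduct]
      _ ≤ ∑ k, |M j k * x k| := abs_sum_le_sum_abs _ _
      _ ≤ ∑ k, e * |x k| := by
          refine sum_le_sum fun k _ => ?_
          rw [abs_mul]
          exact mul_le_mul_of_nonneg_right (hM j k) (abs_nonneg _)
      _ = e * ∑ k, |x k| := by rw [mul_sum]
  have h2 : |x ⬝ᵥ M.mulVec x| ≤ ∑ j, |x j| * (e * ∑ k, |x k|) := by
    calc |x ⬝ᵥ M.mulVec x| = |∑ j, x j * M.mulVec x j| := by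
          simp [dotProduct]
      _ ≤ ∑ j, |x j * M.mulVec x j| := abs_sum_le_sum_abs _ _
      _ ≤ ∑ j, |x j| * (e * ∑ k, |x k|) := by
          refine sum_le_sum fun j _ => ?_
          rw [abs_mul]
          exact mul_le_mul_of_nonneg_left (habs j) (abs_nonneg _)
  have h3 : ∑ j, |x j| * (e * ∑ k, |x k|) = e * (∑ j, |x j|) ^ 2 := by
    rw [← sum_mul]; ring
  have h4 : (∑ j, |x j|) ^ 2 ≤ (Fintype.card m : ℝ) * ∑ j, x j ^ 2 := by
    have := sq_sum_le_card_mul_sum_sq (s := (univ : Finset m)) (f := fun j => |x j|)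
    simpa [sq_abs, Finset.card_univ] using this
  calc |x ⬝ᵥ M.mulVec x| ≤ e * (∑ j, |x j|) ^ 2 := by rw [← h3]; exact h2
    _ ≤ e * ((Fintype.card m : ℝ) * ∑ j, x j ^ 2) := mul_le_mul_of_nonneg_left h4 he
    _ = e * (Fintype.card m) * ∑ j, x j ^ 2 := by ring

private lemma psd_of_isEmpty {m : Type*} [Fintype m] [IsEmpty m] (M : Matrix m m ℝ) :
    M.PosSemidef := by
  refine Matrix.PosSemidef.of_dotProduct_mulVec_nonneg (Matrix.ext fun j k => isEmptyElim j) fun x => ?_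
  simp [dotProduct]

private lemma herm_smul_one {m : Type*} [Fintype m] [DecidableEq m] (c : ℝ) :
    (c • (1 : Matrix m m ℝ)).IsHermitian := by
  refine Matrix.ext fun j k => ?_
  by_cases h : j = k
  · subst h; simp
  · simp [Matrix.conjTranspose_apply, Matrix.one_apply, h, Ne.symm h]

theorem mom_covariance_eigenvalue_stability
    {b p R n : ℕ}
    (J : ℕ → Finset (Fin b))
    (β : EuclideanSpace ℝ (Fin p))
    (ε₀ ε₁ δ₀ M₀ L₁ : ℝ)
    (hε₀ : 0 < ε₀) (hε₀₁ : ε₀ ≤ ε₁)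
    (hδ₀ : δ₀ ≤ 1) (hM₀ : 1 ≤ M₀) (hδM : δ₀ ≤ M₀ / 16) (hδpos : 0 < δ₀)
    -- data: responses and mean functions g j i = g_j(X_i, ·)
    (Y : ℕ → Fin b → ℝ)
    (g : Fin b → ℕ → EuclideanSpace ℝ (Fin p) → ℝ)
    (G : Fin b → ℕ → EuclideanSpace ℝ (Fin p) → EuclideanSpace ℝ (Fin p))
    (s : ℕ → Fin b → ℝ)
    (hG : ∀ j i, ∀ x ∈ closedBall β ε₁, HasGradientAt (g j i) (G j i x) x)
    (hs : ∀ j i, ∀ x ∈ closedBall β ε₁, ‖G j i x‖ ≤ s i j)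
    (hL₁ : ∀ i j, s i j ≤ L₁)
    -- Assumption A1: classes I(j,k,l), indexed by r ∈ Fin R, with coordinates (jc r, kc r)
    (Icl : Fin R → Finset ℕ) (jc kc : Fin R → Fin b)
    (ridx : ℕ → Fin b → Fin b → Fin R)
    (hne : ∀ r, (Icl r).Nonempty)
    (hmem : ∀ r, ∀ i ∈ Icl r, jc r ∈ J i ∧ kc r ∈ J i)
    (hridx : ∀ i < n, ∀ j ∈ J i, ∀ k ∈ J i,
      i ∈ Icl (ridx i j k) ∧ jc (ridx i j k) = j ∧ kc (ridx i j k) = k)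
    (hclsym : ∀ i < n, ∀ j ∈ J i, ∀ k ∈ J i, Icl (ridx i k j) = Icl (ridx i j k))
    -- (B2), in both coordinate orders (the set D of pairs is symmetric)
    (hB2 : ∀ r : Fin R,
      ((Icl r).card : ℝ)⁻¹ *
          ∑ i ∈ Icl r, (1 + s i (jc r)) * |Y i (kc r) - g (kc r) i β| ≤ (Real.sqrt ε₀)⁻¹ ∧
      ((Icl r).card : ℝ)⁻¹ *
          ∑ i ∈ Icl r, (1 + s i (kc r)) * |Y i (jc r) - g (jc r) i β| ≤ (Real.sqrt ε₀)⁻¹)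
    -- (C1)
    (hC1 : (b : ℝ) ^ 2 * (2 * Real.sqrt ε₀ + L₁ ^ 2 * ε₀ ^ 2) ≤ δ₀) :
    -- vh βt is the vector of MoM covariance estimators computed at the parameter value βt
    ∀ vh : EuclideanSpace ℝ (Fin p) → Fin R → ℝ,
      (vh = fun βt r => ((Icl r).card : ℝ)⁻¹ *
        ∑ i ∈ Icl r, (Y i (jc r) - g (jc r) i βt) * (Y i (kc r) - g (kc r) i βt)) →
      -- (B1): 2δ₀ ≤ λ_min(Ṽ_i), λ_max(Ṽ_i) ≤ M₀/2, where Ṽ_i is computed at the true β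
      (∀ i < n,
        ((Matrix.of fun j k : {x // x ∈ J i} => vh β (ridx i j.1 k.1)) -
            (2 * δ₀) • 1).PosSemidef ∧
        ((M₀ / 2) • (1 : Matrix {x // x ∈ J i} {x // x ∈ J i} ℝ) -
            Matrix.of fun j k : {x // x ∈ J i} => vh β (ridx i j.1 k.1)).PosSemidef) →
      -- conclusion: δ₀ ≤ λ_min(V̂_i), λ_max(V̂_i) ≤ (9/16)M₀, V̂_i computed at β̂
      ∀ βh : EuclideanSpace ℝ (Fin p), ‖βh - β‖ ≤ ε₀ →
        ∀ i < n,
          ((Matrix.of fun j k : {x // x ∈ J i} => vh βh (ridx i j.1 k.1)) -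
              δ₀ • 1).PosSemidef ∧
          ((9 / 16 * M₀) • (1 : Matrix {x // x ∈ J i} {x // x ∈ J i} ℝ) -
              Matrix.of fun j k : {x // x ∈ J i} => vh βh (ridx i j.1 k.1)).PosSemidef := by
  intro vh hvh hB1 βh hβh i hi
  by_cases hb0 : b = 0
  · subst hb0
    have : IsEmpty {x // x ∈ J i} := ⟨fun j => Fin.elim0 j.1⟩
    exact ⟨psd_of_isEmpty _, psd_of_isEmpty _⟩
  have hb : 0 < b := Nat.pos_of_ne_zero hb0
  have hε₁0 : (0 : ℝ) ≤ ε₁ := hε₀.le.trans hε₀₁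
  have hs0 : ∀ i' j', 0 ≤ s i' j' := fun i' j' =>
    (norm_nonneg _).trans (hs j' i' β (mem_closedBall_self hε₁0))
  have hL₁0 : 0 ≤ L₁ := (hs0 0 ⟨0, hb⟩).trans (hL₁ 0 ⟨0, hb⟩)
  have hd : ∀ i' j', |g j' i' βh - g j' i' β| ≤ s i' j' * ε₀ := fun i' j' =>
    mvt_abs_le hε₀.le hε₀₁ (hG j' i') (hs j' i') hβh
  have hsqrt : 0 < Real.sqrt ε₀ := Real.sqrt_pos.2 hε₀
  set e : ℝ := 2 * Real.sqrt ε₀ + L₁ ^ 2 * ε₀ ^ 2 with he_def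
  have he0 : 0 ≤ e := by positivity
  -- entrywise difference bound
  have hdiffr : ∀ r : Fin R, |vh βh r - vh β r| ≤ e := by
    intro r
    have hcard : (0 : ℝ) < ((Icl r).card : ℝ) := by
      exact_mod_cast Finset.card_pos.2 (hne r)
    rw [hvh]
    simp only
    rw [← mul_sub, ← Finset.sum_sub_distrib]
    have hterm : ∀ i' ∈ Icl r,
        |(Y i' (jc r) - g (jc r) i' βh) * (Y i' (kc r) - g (kc r) i' βh) -
          (Y i' (jc r) - g (jc r) i' β) * (Y i' (kc r) - g (kc r) i' β)|
        ≤ ε₀ * ((1 + s i' (kc r)) * |Y i' (jc r) - g (jc r) i' β|) +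
          ε₀ * ((1 + s i' (jc r)) * |Y i' (kc r) - g (kc r) i' β|) + L₁ ^ 2 * ε₀ ^ 2 := by
      intro i' _
      have expand : (Y i' (jc r) - g (jc r) i' βh) * (Y i' (kc r) - g (kc r) i' βh) -
          (Y i' (jc r) - g (jc r) i' β) * (Y i' (kc r) - g (kc r) i' β) =
          (-((Y i' (jc r) - g (jc r) i' β) * (g (kc r) i' βh - g (kc r) i' β))) +
          (-((Y i' (kc r) - g (kc r) i' β) * (g (jc r) i' βh - g (jc r) i' β))) +
          (g (jc r) i' βh - g (jc r) i' β) * (g (kc r) i' βh - g (kc r) i' β) := by ring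
      rw [expand]
      have hdj := hd i' (jc r)
      have hdk := hd i' (kc r)
      have b1 : |(Y i' (jc r) - g (jc r) i' β) * (g (kc r) i' βh - g (kc r) i' β)| ≤
          |Y i' (jc r) - g (jc r) i' β| * (s i' (kc r) * ε₀) := by
        rw [abs_mul]; exact mul_le_mul_of_nonneg_left hdk (abs_nonneg _)
      have b2 : |(Y i' (kc r) - g (kc r) i' β) * (g (jc r) i' βh - g (jc r) i' β)| ≤
          |Y i' (kc r) - g (kc r) i' β| * (s i' (jc r) * ε₀) := by
        rw [abs_mul]; exact mul_le_mul_of_nonneg_left hdj (abs_nonneg _)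
      have b3 : |(g (jc r) i' βh - g (jc r) i' β) * (g (kc r) i' βh - g (kc r) i' β)| ≤
          L₁ ^ 2 * ε₀ ^ 2 := by
        rw [abs_mul]
        have e1 : |g (jc r) i' βh - g (jc r) i' β| ≤ L₁ * ε₀ :=
          hdj.trans (mul_le_mul_of_nonneg_right (hL₁ i' (jc r)) hε₀.le)
        have e2 : |g (kc r) i' βh - g (kc r) i' β| ≤ L₁ * ε₀ :=
          hdk.trans (mul_le_mul_of_nonneg_right (hL₁ i' (kc r)) hε₀.le)
        calc |g (jc r) i' βh - g (jc r) i' β| * |g (kc r) i' βh - g (kc r) i' β|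
            ≤ (L₁ * ε₀) * (L₁ * ε₀) :=
              mul_le_mul e1 e2 (abs_nonneg _) (by positivity)
          _ = L₁ ^ 2 * ε₀ ^ 2 := by ring
      calc |(-((Y i' (jc r) - g (jc r) i' β) * (g (kc r) i' βh - g (kc r) i' β))) +
            (-((Y i' (kc r) - g (kc r) i' β) * (g (jc r) i' βh - g (jc r) i' β))) +
            (g (jc r) i' βh - g (jc r) i' β) * (g (kc r) i' βh - g (kc r) i' β)|
          ≤ |(-((Y i' (jc r) - g (jc r) i' β) * (g (kc r) i' βh - g (kc r) i' β)))| +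
            |(-((Y i' (kc r) - g (kc r) i' β) * (g (jc r) i' βh - g (jc r) i' β)))| +
            |(g (jc r) i' βh - g (jc r) i' β) * (g (kc r) i' βh - g (kc r) i' β)| :=
            abs_add_three _ _ _
        _ ≤ |Y i' (jc r) - g (jc r) i' β| * (s i' (kc r) * ε₀) +
            |Y i' (kc r) - g (kc r) i' β| * (s i' (jc r) * ε₀) + L₁ ^ 2 * ε₀ ^ 2 := by
            rw [abs_neg, abs_neg]; exact add_le_add (add_le_add b1 b2) b3
        _ ≤ ε₀ * ((1 + s i' (kc r)) * |Y i' (jc r) - g (jc r) i' β|) +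
            ε₀ * ((1 + s i' (jc r)) * |Y i' (kc r) - g (kc r) i' β|) + L₁ ^ 2 * ε₀ ^ 2 := by
            have n1 : 0 ≤ |Y i' (jc r) - g (jc r) i' β| := abs_nonneg _
            have n2 : 0 ≤ |Y i' (kc r) - g (kc r) i' β| := abs_nonneg _
            nlinarith [mul_nonneg hε₀.le n1, mul_nonneg hε₀.le n2]
    have hsum : |∑ i' ∈ Icl r,
        ((Y i' (jc r) - g (jc r) i' βh) * (Y i' (kc r) - g (kc r) i' βh) -
         (Y i' (jc r) - g (jc r) i' β) * (Y i' (kc r) - g (kc r) i' β))|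
        ≤ ∑ i' ∈ Icl r,
          (ε₀ * ((1 + s i' (kc r)) * |Y i' (jc r) - g (jc r) i' β|) +
           ε₀ * ((1 + s i' (jc r)) * |Y i' (kc r) - g (kc r) i' β|) + L₁ ^ 2 * ε₀ ^ 2) :=
      (abs_sum_le_sum_abs _ _).trans (Finset.sum_le_sum hterm)
    have hinv0 : (0 : ℝ) ≤ (((Icl r).card : ℝ))⁻¹ := inv_nonneg.2 hcard.le
    have hsqrtval : ε₀ * (Real.sqrt ε₀)⁻¹ = Real.sqrt ε₀ := by
      field_simp
      rw [Real.sq_sqrt hε₀.le]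
    calc |(((Icl r).card : ℝ))⁻¹ * ∑ i' ∈ Icl r,
            ((Y i' (jc r) - g (jc r) i' βh) * (Y i' (kc r) - g (kc r) i' βh) -
             (Y i' (jc r) - g (jc r) i' β) * (Y i' (kc r) - g (kc r) i' β))|
        = (((Icl r).card : ℝ))⁻¹ * |∑ i' ∈ Icl r,
            ((Y i' (jc r) - g (jc r) i' βh) * (Y i' (kc r) - g (kc r) i' βh) -
             (Y i' (jc r) - g (jc r) i' β) * (Y i' (kc r) - g (kc r) i' β))| := by
          rw [abs_mul, abs_of_nonneg hinv0]
      _ ≤ (((Icl r).card : ℝ))⁻¹ * ∑ i' ∈ Icl r,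
            (ε₀ * ((1 + s i' (kc r)) * |Y i' (jc r) - g (jc r) i' β|) +
             ε₀ * ((1 + s i' (jc r)) * |Y i' (kc r) - g (kc r) i' β|) + L₁ ^ 2 * ε₀ ^ 2) :=
          mul_le_mul_of_nonneg_left hsum hinv0
      _ = ε₀ * ((((Icl r).card : ℝ))⁻¹ *
              ∑ i' ∈ Icl r, (1 + s i' (kc r)) * |Y i' (jc r) - g (jc r) i' β|) +
          ε₀ * ((((Icl r).card : ℝ))⁻¹ *
              ∑ i' ∈ Icl r, (1 + s i' (jc r)) * |Y i' (kc r) - g (kc r) i' β|) +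
          ((((Icl r).card : ℝ))⁻¹ * ((Icl r).card : ℝ)) * (L₁ ^ 2 * ε₀ ^ 2) := by
          rw [Finset.sum_add_distrib, Finset.sum_add_distrib, Finset.sum_const,
            ← Finset.mul_sum, ← Finset.mul_sum, nsmul_eq_mul]
          ring
      _ ≤ ε₀ * (Real.sqrt ε₀)⁻¹ + ε₀ * (Real.sqrt ε₀)⁻¹ + 1 * (L₁ ^ 2 * ε₀ ^ 2) := by
          rw [inv_mul_cancel₀ hcard.ne']
          exact add_le_add (add_le_add
            (mul_le_mul_of_nonneg_left (hB2 r).2 hε₀.le)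
            (mul_le_mul_of_nonneg_left (hB2 r).1 hε₀.le)) le_rfl
      _ = e := by rw [hsqrtval, he_def]; ring
  -- symmetry of the matrices
  have hsym : ∀ βt : EuclideanSpace ℝ (Fin p), ∀ j ∈ J i, ∀ k ∈ J i,
      vh βt (ridx i k j) = vh βt (ridx i j k) := by
    intro βt j hj k hk
    obtain ⟨h1, hj1, hk1⟩ := hridx i hi j hj k hk
    obtain ⟨h2, hj2, hk2⟩ := hridx i hi k hk j hj
    rw [hvh]
    simp only
    rw [hj1, hk1, hj2, hk2, hclsym i hi j hj k hk]
    congr 1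
    exact Finset.sum_congr rfl fun i' _ => by ring
  have hherm : ∀ βt : EuclideanSpace ℝ (Fin p),
      (Matrix.of fun j k : {x // x ∈ J i} => vh βt (ridx i j.1 k.1)).IsHermitian := by
    intro βt
    refine Matrix.ext fun j k => ?_
    simp only [Matrix.conjTranspose_apply, Matrix.of_apply, star_trivial]
    exact hsym βt j.1 j.2 k.1 k.2
  -- quadratic form bounds
  have hcardm : (Fintype.card {x // x ∈ J i} : ℝ) ≤ (b : ℝ) ^ 2 := by
    have h1 : Fintype.card {x // x ∈ J i} = (J i).card := Fintype.card_coe _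
    have h2 : (J i).card ≤ b := by
      simpa using Finset.card_le_univ (J i)
    have : Fintype.card {x // x ∈ J i} ≤ b ^ 2 :=
      (h1 ▸ h2).trans (Nat.le_self_pow two_ne_zero b)
    exact_mod_cast this
  have hecard : e * (Fintype.card {x // x ∈ J i} : ℝ) ≤ δ₀ := by
    calc e * (Fintype.card {x // x ∈ J i} : ℝ) ≤ e * ((b : ℝ) ^ 2) :=
          mul_le_mul_of_nonneg_left hcardm he0
      _ = (b : ℝ) ^ 2 * e := mul_comm _ _
      _ ≤ δ₀ := hC1
  set A : Matrix {x // x ∈ J i} {x // x ∈ J i} ℝ :=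
    Matrix.of fun j k : {x // x ∈ J i} => vh βh (ridx i j.1 k.1) with hA
  set At : Matrix {x // x ∈ J i} {x // x ∈ J i} ℝ :=
    Matrix.of fun j k : {x // x ∈ J i} => vh β (ridx i j.1 k.1) with hAt
  have hD : ∀ x : {x // x ∈ J i} → ℝ,
      |x ⬝ᵥ (A *ᵥ x) - x ⬝ᵥ (At *ᵥ x)| ≤ δ₀ * ∑ j, x j ^ 2 := by
    intro x
    have hq := quadform_abs_le (M := A - At) he0
      (fun j k => by
        simp only [Matrix.sub_apply, hA, hAt, Matrix.of_apply]
        exact hdiffr _) x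
    rw [Matrix.sub_mulVec, dotProduct_sub] at hq
    have hS0 : (0 : ℝ) ≤ ∑ j, x j ^ 2 := Finset.sum_nonneg fun j _ => sq_nonneg _
    exact hq.trans (mul_le_mul_of_nonneg_right hecard hS0)
  obtain ⟨hlo, hhi⟩ := hB1 i hi
  have hxx : ∀ x : {x // x ∈ J i} → ℝ, x ⬝ᵥ x = ∑ j, x j ^ 2 := by
    intro x; simp [dotProduct, sq]
  have hqlo : ∀ x : {x // x ∈ J i} → ℝ, 2 * δ₀ * (∑ j, x j ^ 2) ≤ x ⬝ᵥ (At *ᵥ x) := by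
    intro x
    have h := hlo.dotProduct_mulVec_nonneg x
    simp only [star_trivial, Matrix.sub_mulVec, Matrix.smul_mulVec, Matrix.one_mulVec,
      dotProduct_sub, dotProduct_smul, smul_eq_mul] at h
    rw [hxx x] at h
    linarith
  have hqhi : ∀ x : {x // x ∈ J i} → ℝ, x ⬝ᵥ (At *ᵥ x) ≤ M₀ / 2 * ∑ j, x j ^ 2 := by
    intro x
    have h := hhi.dotProduct_mulVec_nonneg x
    simp only [star_trivial, Matrix.sub_mulVec, Matrix.smul_mulVec, Matrix.one_mulVec,
      dotProduct_sub, dotProduct_smul, smul_eq_mul] at h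
    rw [hxx x] at h
    linarith
  have hS0 : ∀ x : {x // x ∈ J i} → ℝ, (0 : ℝ) ≤ ∑ j, x j ^ 2 :=
    fun x => Finset.sum_nonneg fun j _ => sq_nonneg _
  constructor
  · refine Matrix.PosSemidef.of_dotProduct_mulVec_nonneg ((hherm βh).sub (herm_smul_one δ₀)) fun x => ?_
    simp only [star_trivial, Matrix.sub_mulVec, Matrix.smul_mulVec, Matrix.one_mulVec,
      dotProduct_sub, dotProduct_smul, smul_eq_mul]
    rw [hxx x]
    have h1 := hqlo x
    have h2 := abs_le.mp (hD x)
    linarith [h2.1, h2.2]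
  · refine Matrix.PosSemidef.of_dotProduct_mulVec_nonneg ((herm_smul_one (9 / 16 * M₀)).sub (hherm βh)) fun x => ?_
    simp only [star_trivial, Matrix.sub_mulVec, Matrix.smul_mulVec, Matrix.one_mulVec,
      dotProduct_sub, dotProduct_smul, smul_eq_mul]
    rw [hxx x]
    have h1 := hqhi x
    have h2 := abs_le.mp (hD x)
    have h3 : δ₀ * (∑ j, x j ^ 2) ≤ M₀ / 16 * (∑ j, x j ^ 2) :=
      mul_le_mul_of_nonneg_right hδM (hS0 x)
    linarith [h2.1, h2.2]
end

section
/- Lemma 6. Fix constants 0 < ε0 ≤ ε1 and η > 0. Assume: (B2) n(j,k,l)^{-1} Σ_{i∈I(j,k,l)} (1 + s_{ij}) |Y_{ik} − μ_{ik}| ≤ ε0^{-1/2} for all q, l, (j,k); (B3) sup_{v∈𝒱} ‖∂β/∂v‖ ≤ ε0^{-1/4}; (B5) n(j,k,l)^{-1} | Σ_{i∈I(j,k,l)} (∂μ_{ij}/∂β_q)(Y_{ik} − μ_{ik}) | ≤ ε0^{1/2} for all 1 ≤ q ≤ p, 1 ≤ l ≤ L_{jk}, (j,k) ∈ D; and (C2)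 √(R(R ∨ p)) [ L1² ε0^{3/4} + (L2 + 1) ε0^{1/4} ] ≤ η/2. Then for any β̂ with |β̂ − β| ≤ ε0 and any v̂ ∈ 𝒱: | (∂τ/∂β_q)|_{β=β̂} | ≤ η for all 1 ≤ q ≤ p, and | (∂ρ/∂v_r)|_{v=v̂} | ≤ η for all 1 ≤ r ≤ R, where τ = β ∘ v and ρ = v ∘ β. -/
open Metric Finset Matrix
open InnerProductSpace

noncomputable section

/-- the working covariance matrix `V_i` built from a covariance vector `v` via the class
assignment `ridx` of Assumption A1 -/
def workingCov {b R : ℕ} (J : ℕ → Finset (Fin b)) (ridx : ℕ → Fin b → Fin b → Fin R)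
    (v : EuclideanSpace ℝ (Fin R)) (i : ℕ) :
    Matrix {j // j ∈ J i} {j // j ∈ J i} ℝ :=
  Matrix.of fun j k => v (ridx i j.1 k.1)

/-- membership in the set `𝒱 = {v : δ₀ ≤ λ_min(V_i), λ_max(V_i) ≤ M₀, i ≤ n}` -/
def inVset {b R : ℕ} (J : ℕ → Finset (Fin b)) (ridx : ℕ → Fin b → Fin b → Fin R)
    (n : ℕ) (δ₀ M₀ : ℝ) (v : EuclideanSpace ℝ (Fin R)) : Prop :=
  ∀ i < n, ((workingCov J ridx v i) - δ₀ • 1).PosSemidef ∧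
    (M₀ • (1 : Matrix {j // j ∈ J i} {j // j ∈ J i} ℝ) - workingCov J ridx v i).PosSemidef

/-- the method of moments map `β̃ ↦ v(β̃)` of (3.2), with components
`v̂(j,k,l) = n(j,k,l)⁻¹ Σ_{i∈I(j,k,l)} (Y_{ij} − g_j(X_i,β̃))(Y_{ik} − g_k(X_i,β̃))` -/
def momMap {b p R : ℕ} (Y : ℕ → Fin b → ℝ) (g : Fin b → ℕ → EuclideanSpace ℝ (Fin p) → ℝ)
    (Icl : Fin R → Finset ℕ) (jc kc : Fin R → Fin b)
    (βt : EuclideanSpace ℝ (Fin p)) : EuclideanSpace ℝ (Fin R) :=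
  WithLp.toLp 2 fun r => ((Icl r).card : ℝ)⁻¹ *
    ∑ i ∈ Icl r, (Y i (jc r) - g (jc r) i βt) * (Y i (kc r) - g (kc r) i βt)

/-!
Lemma 6 of Jiang–Luan–Wang. Under the events
(B2) `n(j,k,l)⁻¹ Σ_{i∈I(j,k,l)} (1+s_{ij})|Y_{ik} − μ_{ik}| ≤ ε₀^{-1/2}`,
(B3) `sup_{v∈𝒱} ‖∂β/∂v‖ ≤ ε₀^{-1/4}`,
(B5) `n(j,k,l)⁻¹ |Σ_{i∈I(j,k,l)} (∂μ_{ij}/∂β_q)(Y_{ik} − μ_{ik})| ≤ ε₀^{1/2}`, and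
(C2) `√(R(R ∨ p)) [L₁² ε₀^{3/4} + (L₂+1) ε₀^{1/4}] ≤ η/2`,
for any `β̂` with `|β̂ − β| ≤ ε₀` and any `v̂ ∈ 𝒱` one has
`|(∂τ/∂β_q)|_{β=β̂}| ≤ η` (for all `q`) and `|(∂ρ/∂v_r)|_{v=v̂}| ≤ η` (for all `r`),
where `τ = β ∘ v` and `ρ = v ∘ β` are the composed iteration maps
(`β(·)` the GEE-solution map and `v(·)` the MoM map; `β̂` and `v̂` are linked through
those maps as in the proof of Theorem 1).
-/



lemma sum_abs_le_sqrt_card {p : ℕ} (u : EuclideanSpace ℝ (Fin p)) :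
    ∑ q, |u q| ≤ Real.sqrt p * ‖u‖ := by
  have h := Finset.sum_mul_sq_le_sq_mul_sq Finset.univ (fun q => |u q|) (fun _ => 1)
  simp only [mul_one, one_pow, sum_const, card_univ, Fintype.card_fin, nsmul_eq_mul, sq_abs] at h
  have hn : ‖u‖ ^ 2 = ∑ q, u q ^ 2 := by
    rw [EuclideanSpace.norm_eq, Real.sq_sqrt (by positivity)]
    simp [Real.norm_eq_abs, sq_abs]
  have h2 : (∑ q, |u q|) ^ 2 ≤ (Real.sqrt p * ‖u‖) ^ 2 := by
    rw [mul_pow, Real.sq_sqrt (by positivity), hn]; nlinarith [h]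
  have h3 : (0:ℝ) ≤ ∑ q, |u q| := by positivity
  nlinarith [Real.sqrt_nonneg (p:ℝ), norm_nonneg u, mul_nonneg (Real.sqrt_nonneg (p:ℝ)) (norm_nonneg u)]

lemma euc_norm_le_sqrt_mul {R : ℕ} (w : EuclideanSpace ℝ (Fin R)) (M : ℝ)
    (h : ∀ r, |w r| ≤ M) : ‖w‖ ≤ Real.sqrt R * M := by
  rcases Nat.eq_zero_or_pos R with hR | hR
  · subst hR; simp [EuclideanSpace.norm_eq]
  · have hM : 0 ≤ M := le_trans (abs_nonneg _) (h ⟨0, hR⟩)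
    rw [EuclideanSpace.norm_eq]
    have : ∑ r, ‖w r‖ ^ 2 ≤ (R : ℝ) * M ^ 2 := by
      calc ∑ r, ‖w r‖ ^ 2 ≤ ∑ _r : Fin R, M ^ 2 := by
            refine Finset.sum_le_sum fun r _ => ?_
            rw [Real.norm_eq_abs]
            exact pow_le_pow_left₀ (abs_nonneg _) (h r) 2
        _ = (R : ℝ) * M ^ 2 := by simp [mul_comm]
    calc Real.sqrt (∑ r, ‖w r‖ ^ 2) ≤ Real.sqrt ((R:ℝ) * M ^ 2) := Real.sqrt_le_sqrt this
      _ = Real.sqrt R * M := by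
          rw [Real.sqrt_mul (by positivity), Real.sqrt_sq hM]


lemma half_bound {p : ℕ} (β x : EuclideanSpace ℝ (Fin p)) (ε₀ ε₁ L₁ L₂ : ℝ)
    (hε₀ : 0 < ε₀) (hε₀₁ : ε₀ ≤ ε₁) (hx : ‖x - β‖ ≤ ε₀)
    (I : Finset ℕ) (hne : I.Nonempty)
    (Yk : ℕ → ℝ) (gk : ℕ → EuclideanSpace ℝ (Fin p) → ℝ)
    (Gk Gj : ℕ → EuclideanSpace ℝ (Fin p) → EuclideanSpace ℝ (Fin p))
    (Hj : ℕ → EuclideanSpace ℝ (Fin p) → (EuclideanSpace ℝ (Fin p) →L[ℝ] EuclideanSpace ℝ (Fin p)))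
    (hgk : ∀ i y, HasGradientAt (gk i) (Gk i y) y)
    (hGj : ∀ i y, HasFDerivAt (Gj i) (Hj i y) y)
    (hGjL : ∀ i, ∀ y ∈ closedBall β ε₁, ‖Gj i y‖ ≤ L₁)
    (hGkL : ∀ i, ∀ y ∈ closedBall β ε₁, ‖Gk i y‖ ≤ L₁)
    (hHL : ∀ i, ∀ y ∈ closedBall β ε₁, ‖Hj i y‖ ≤ L₂)
    (hB2 : (I.card : ℝ)⁻¹ * ∑ i ∈ I, |Yk i - gk i β| ≤ (Real.sqrt ε₀)⁻¹)
    (hB5 : ∀ q : Fin p, |(I.card : ℝ)⁻¹ * ∑ i ∈ I, (Gj i β q) * (Yk i - gk i β)| ≤ Real.sqrt ε₀)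
    (u : EuclideanSpace ℝ (Fin p)) :
    |(I.card : ℝ)⁻¹ * ∑ i ∈ I, (Yk i - gk i x) * (inner ℝ (Gj i x) u : ℝ)| ≤
      (Real.sqrt p * Real.sqrt ε₀ + L₂ * Real.sqrt ε₀ + L₁ ^ 2 * ε₀) * ‖u‖ := by
  set c : ℝ := (I.card : ℝ)⁻¹ with hcdef
  have hcard : (0:ℝ) < I.card := by exact_mod_cast Finset.card_pos.mpr hne
  have hc : 0 ≤ c := by positivity
  have hc1 : c * I.card = 1 := inv_mul_cancel₀ (ne_of_gt hcard)
  have hβmem : β ∈ closedBall β ε₁ := mem_closedBall_self (le_trans hε₀.le hε₀₁)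
  have hxmem : x ∈ closedBall β ε₁ := by
    rw [mem_closedBall_iff_norm]; exact hx.trans hε₀₁
  have hL₁0 : 0 ≤ L₁ := le_trans (norm_nonneg _) (hGjL hne.choose β hβmem)
  have hL₂0 : 0 ≤ L₂ := le_trans (norm_nonneg _) (hHL hne.choose β hβmem)
  have hGdiff : ∀ i, ‖Gj i x - Gj i β‖ ≤ L₂ * ε₀ := by
    intro i
    have := Convex.norm_image_sub_le_of_norm_hasFDerivWithin_le
      (f := Gj i) (f' := Hj i) (s := closedBall β ε₁)
      (fun y hy => (hGj i y).hasFDerivWithinAt) (fun y hy => hHL i y hy)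
      (convex_closedBall _ _) hβmem hxmem
    exact this.trans (by nlinarith)
  have hgdiff : ∀ i, |gk i β - gk i x| ≤ L₁ * ε₀ := by
    intro i
    have := Convex.norm_image_sub_le_of_norm_hasFDerivWithin_le
      (f := gk i) (f' := fun y => (toDual ℝ (EuclideanSpace ℝ (Fin p)) (Gk i y) :
        EuclideanSpace ℝ (Fin p) →L[ℝ] ℝ)) (s := closedBall β ε₁)
      (fun y hy => (hgk i y).hasFDerivAt.hasFDerivWithinAt)
      (fun y hy => by rw [(toDual ℝ _).norm_map]; exact hGkL i y hy)
      (convex_closedBall _ _) hβmem hxmem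
    rw [Real.norm_eq_abs, abs_sub_comm] at this
    exact this.trans (by nlinarith)
  have hGx : ∀ i, ‖Gj i x‖ ≤ L₁ := fun i => hGjL i x hxmem
  have hsplit : (∑ i ∈ I, (Yk i - gk i x) * (inner ℝ (Gj i x) u : ℝ)) =
      (∑ i ∈ I, (Yk i - gk i β) * (inner ℝ (Gj i β) u : ℝ)) +
      (∑ i ∈ I, (Yk i - gk i β) * (inner ℝ (Gj i x - Gj i β) u : ℝ)) +
      (∑ i ∈ I, (gk i β - gk i x) * (inner ℝ (Gj i x) u : ℝ)) := by
    rw [← Finset.sum_add_distrib, ← Finset.sum_add_distrib]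
    refine Finset.sum_congr rfl fun i _ => ?_
    rw [inner_sub_left]; ring
  have habs : |c * ∑ i ∈ I, (Yk i - gk i x) * (inner ℝ (Gj i x) u : ℝ)| ≤
      |c * ∑ i ∈ I, (Yk i - gk i β) * (inner ℝ (Gj i β) u : ℝ)| +
      |c * ∑ i ∈ I, (Yk i - gk i β) * (inner ℝ (Gj i x - Gj i β) u : ℝ)| +
      |c * ∑ i ∈ I, (gk i β - gk i x) * (inner ℝ (Gj i x) u : ℝ)| := by
    rw [hsplit, mul_add, mul_add]
    exact (abs_add_le _ _).trans (by gcongr; exact abs_add_le _ _)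
  have h1 : |c * ∑ i ∈ I, (Yk i - gk i β) * (inner ℝ (Gj i β) u : ℝ)| ≤
      Real.sqrt p * Real.sqrt ε₀ * ‖u‖ := by
    have hrw : c * ∑ i ∈ I, (Yk i - gk i β) * (inner ℝ (Gj i β) u : ℝ) =
        ∑ q, u q * (c * ∑ i ∈ I, (Gj i β q) * (Yk i - gk i β)) := by
      simp only [PiLp.inner_apply, RCLike.inner_apply, conj_trivial]
      simp_rw [Finset.mul_sum]
      rw [Finset.sum_comm]
      exact Finset.sum_congr rfl fun q _ => Finset.sum_congr rfl fun i _ => by ring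
    rw [hrw]
    calc |∑ q, u q * (c * ∑ i ∈ I, (Gj i β q) * (Yk i - gk i β))| ≤
          ∑ q, |u q * (c * ∑ i ∈ I, (Gj i β q) * (Yk i - gk i β))| :=
        Finset.abs_sum_le_sum_abs _ _
      _ ≤ ∑ q, |u q| * Real.sqrt ε₀ := by
          refine Finset.sum_le_sum fun q _ => ?_
          rw [abs_mul]
          exact mul_le_mul_of_nonneg_left (hB5 q) (abs_nonneg _)
      _ = (∑ q, |u q|) * Real.sqrt ε₀ := by rw [← Finset.sum_mul]
      _ ≤ Real.sqrt p * ‖u‖ * Real.sqrt ε₀ := by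
          exact mul_le_mul_of_nonneg_right (sum_abs_le_sqrt_card u) (Real.sqrt_nonneg _)
      _ = Real.sqrt p * Real.sqrt ε₀ * ‖u‖ := by ring
  have h2 : |c * ∑ i ∈ I, (Yk i - gk i β) * (inner ℝ (Gj i x - Gj i β) u : ℝ)| ≤
      L₂ * Real.sqrt ε₀ * ‖u‖ := by
    have hsq : Real.sqrt ε₀ * Real.sqrt ε₀ = ε₀ := Real.mul_self_sqrt hε₀.le
    have hspos : 0 < Real.sqrt ε₀ := Real.sqrt_pos.mpr hε₀
    calc |c * ∑ i ∈ I, (Yk i - gk i β) * (inner ℝ (Gj i x - Gj i β) u : ℝ)| ≤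
          c * ∑ i ∈ I, |(Yk i - gk i β) * (inner ℝ (Gj i x - Gj i β) u : ℝ)| := by
            rw [abs_mul, abs_of_nonneg hc]
            exact mul_le_mul_of_nonneg_left (Finset.abs_sum_le_sum_abs _ _) hc
      _ ≤ c * ∑ i ∈ I, |Yk i - gk i β| * (L₂ * ε₀ * ‖u‖) := by
            refine mul_le_mul_of_nonneg_left (Finset.sum_le_sum fun i _ => ?_) hc
            rw [abs_mul]
            refine mul_le_mul_of_nonneg_left ?_ (abs_nonneg _)
            calc |(inner ℝ (Gj i x - Gj i β) u : ℝ)| ≤ ‖Gj i x - Gj i β‖ * ‖u‖ :=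
                abs_real_inner_le_norm _ _
              _ ≤ L₂ * ε₀ * ‖u‖ := mul_le_mul_of_nonneg_right (hGdiff i) (norm_nonneg _)
      _ = (c * ∑ i ∈ I, |Yk i - gk i β|) * (L₂ * ε₀ * ‖u‖) := by
            rw [← Finset.sum_mul]; ring
      _ ≤ (Real.sqrt ε₀)⁻¹ * (L₂ * ε₀ * ‖u‖) := by
            refine mul_le_mul_of_nonneg_right hB2 (by positivity)
      _ = L₂ * Real.sqrt ε₀ * ‖u‖ := by
            rw [show L₂ * ε₀ * ‖u‖ = Real.sqrt ε₀ * (L₂ * Real.sqrt ε₀ * ‖u‖) by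
              linear_combination -L₂ * ‖u‖ * hsq, ← mul_assoc,
              inv_mul_cancel₀ (ne_of_gt hspos), one_mul]
  have h3 : |c * ∑ i ∈ I, (gk i β - gk i x) * (inner ℝ (Gj i x) u : ℝ)| ≤
      L₁ ^ 2 * ε₀ * ‖u‖ := by
    calc |c * ∑ i ∈ I, (gk i β - gk i x) * (inner ℝ (Gj i x) u : ℝ)| ≤
          c * ∑ i ∈ I, |(gk i β - gk i x) * (inner ℝ (Gj i x) u : ℝ)| := by
            rw [abs_mul, abs_of_nonneg hc]
            exact mul_le_mul_of_nonneg_left (Finset.abs_sum_le_sum_abs _ _) hc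
      _ ≤ c * ∑ i ∈ I, (L₁ * ε₀) * (L₁ * ‖u‖) := by
            refine mul_le_mul_of_nonneg_left (Finset.sum_le_sum fun i _ => ?_) hc
            rw [abs_mul]
            refine mul_le_mul (hgdiff i) ?_ (abs_nonneg _) (by positivity)
            calc |(inner ℝ (Gj i x) u : ℝ)| ≤ ‖Gj i x‖ * ‖u‖ := abs_real_inner_le_norm _ _
              _ ≤ L₁ * ‖u‖ := mul_le_mul_of_nonneg_right (hGx i) (norm_nonneg _)
      _ = (c * I.card) * ((L₁ * ε₀) * (L₁ * ‖u‖)) := by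
            rw [Finset.sum_const, nsmul_eq_mul]; ring
      _ = L₁ ^ 2 * ε₀ * ‖u‖ := by rw [hc1]; ring
  exact (habs.trans (add_le_add (add_le_add h1 h2) h3)).trans (le_of_eq (by ring))

def momDeriv {b p R : ℕ} (Y : ℕ → Fin b → ℝ) (g : Fin b → ℕ → EuclideanSpace ℝ (Fin p) → ℝ)
    (G : Fin b → ℕ → EuclideanSpace ℝ (Fin p) → EuclideanSpace ℝ (Fin p))
    (Icl : Fin R → Finset ℕ) (jc kc : Fin R → Fin b) (x : EuclideanSpace ℝ (Fin p)) :
    EuclideanSpace ℝ (Fin p) →L[ℝ] EuclideanSpace ℝ (Fin R) :=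
  ((EuclideanSpace.equiv (Fin R) ℝ).symm.toContinuousLinearMap).comp
    (ContinuousLinearMap.pi fun r =>
      ((Icl r).card : ℝ)⁻¹ • ∑ i ∈ Icl r,
        ((Y i (jc r) - g (jc r) i x) • -(toDual ℝ _ (G (kc r) i x) : EuclideanSpace ℝ (Fin p) →L[ℝ] ℝ) +
         (Y i (kc r) - g (kc r) i x) • -(toDual ℝ _ (G (jc r) i x) : EuclideanSpace ℝ (Fin p) →L[ℝ] ℝ)))

theorem momMap_hasFDerivAt {b p R : ℕ} (Y : ℕ → Fin b → ℝ)
    (g : Fin b → ℕ → EuclideanSpace ℝ (Fin p) → ℝ)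
    (G : Fin b → ℕ → EuclideanSpace ℝ (Fin p) → EuclideanSpace ℝ (Fin p))
    (hG : ∀ j i y, HasGradientAt (g j i) (G j i y) y)
    (Icl : Fin R → Finset ℕ) (jc kc : Fin R → Fin b) (x : EuclideanSpace ℝ (Fin p)) :
    HasFDerivAt (momMap Y g Icl jc kc) (momDeriv Y g G Icl jc kc x) x := by
  have hpi : HasFDerivAt (fun x (r : Fin R) => ((Icl r).card : ℝ)⁻¹ *
      ∑ i ∈ Icl r, (Y i (jc r) - g (jc r) i x) * (Y i (kc r) - g (kc r) i x))
      (ContinuousLinearMap.pi fun r =>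
        ((Icl r).card : ℝ)⁻¹ • ∑ i ∈ Icl r,
          ((Y i (jc r) - g (jc r) i x) • -(toDual ℝ _ (G (kc r) i x) : EuclideanSpace ℝ (Fin p) →L[ℝ] ℝ) +
           (Y i (kc r) - g (kc r) i x) • -(toDual ℝ _ (G (jc r) i x) : EuclideanSpace ℝ (Fin p) →L[ℝ] ℝ))) x := by
    rw [hasFDerivAt_pi]
    intro r
    apply HasFDerivAt.const_mul
    apply HasFDerivAt.fun_sum
    intro i _
    exact ((hG (jc r) i x).hasFDerivAt.const_sub (Y i (jc r))).mul
      ((hG (kc r) i x).hasFDerivAt.const_sub (Y i (kc r)))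
  exact ((EuclideanSpace.equiv (Fin R) ℝ).symm.toContinuousLinearMap.hasFDerivAt).comp x hpi



lemma JLW_arith (ε₀ L₁ L₂ η : ℝ) (R p : ℕ) (hε₀ : 0 < ε₀) (hL₁ : 0 ≤ L₁) (hL₂ : 0 ≤ L₂)
    (hR : 1 ≤ R)
    (hC2 : Real.sqrt ((R : ℝ) * ((max R p : ℕ) : ℝ)) *
      (L₁ ^ 2 * ε₀ ^ ((3 : ℝ) / 4) + (L₂ + 1) * ε₀ ^ ((1 : ℝ) / 4)) ≤ η / 2) :
    (ε₀ ^ ((1 : ℝ) / 4))⁻¹ * (Real.sqrt R *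
      (2 * (Real.sqrt p * Real.sqrt ε₀ + L₂ * Real.sqrt ε₀ + L₁ ^ 2 * ε₀))) ≤ η := by
  set a : ℝ := ε₀ ^ ((1 : ℝ) / 4) with hadef
  have ha : 0 < a := Real.rpow_pos_of_pos hε₀ _
  have hs2 : Real.sqrt ε₀ = a ^ 2 := by
    rw [hadef, ← Real.rpow_natCast (ε₀ ^ ((1:ℝ)/4)) 2, ← Real.rpow_mul hε₀.le]
    norm_num
    rw [Real.sqrt_eq_rpow]
  have hs4 : ε₀ = a ^ 4 := by
    rw [hadef, ← Real.rpow_natCast (ε₀ ^ ((1:ℝ)/4)) 4, ← Real.rpow_mul hε₀.le]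
    norm_num
  have hs3 : ε₀ ^ ((3 : ℝ) / 4) = a ^ 3 := by
    rw [hadef, ← Real.rpow_natCast (ε₀ ^ ((1:ℝ)/4)) 3, ← Real.rpow_mul hε₀.le]
    norm_num
  set M : ℝ := Real.sqrt ((R : ℝ) * ((max R p : ℕ) : ℝ)) with hMdef
  have h1 : Real.sqrt R * Real.sqrt p ≤ M := by
    rw [hMdef, ← Real.sqrt_mul (by positivity)]
    refine Real.sqrt_le_sqrt ?_
    have : (R * p : ℕ) ≤ R * max R p := Nat.mul_le_mul_left _ (le_max_right _ _)
    exact_mod_cast this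
  have h2 : Real.sqrt R ≤ M := by
    rw [hMdef]
    refine Real.sqrt_le_sqrt ?_
    have : (R : ℕ) ≤ R * max R p := Nat.le_mul_of_pos_right _ (lt_of_lt_of_le hR (le_max_left _ _))
    exact_mod_cast this
  rw [hs2] at *
  have hgoal : (a)⁻¹ * (Real.sqrt R * (2 * (Real.sqrt p * a ^ 2 + L₂ * a ^ 2 + L₁ ^ 2 * ε₀))) =
      2 * ((Real.sqrt R * Real.sqrt p) * a + Real.sqrt R * (L₂ * a) + Real.sqrt R * (L₁ ^ 2 * a ^ 3)) := by
    rw [hs4]; field_simp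
  rw [hgoal]
  have hkey : 2 * ((Real.sqrt R * Real.sqrt p) * a + Real.sqrt R * (L₂ * a) +
      Real.sqrt R * (L₁ ^ 2 * a ^ 3)) ≤ 2 * (M * a + M * (L₂ * a) + M * (L₁ ^ 2 * a ^ 3)) := by
    gcongr <;> positivity
  refine hkey.trans ?_
  have := hC2
  rw [hs3] at this
  nlinarith [this]

theorem composed_iteration_maps_derivative_bound
    {b p R n : ℕ} (J : ℕ → Finset (Fin b))
    (β : EuclideanSpace ℝ (Fin p))
    (ε₀ ε₁ δ₀ M₀ L₁ L₂ η : ℝ)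
    (hε₀ : 0 < ε₀) (hε₀₁ : ε₀ ≤ ε₁) (hδ₀ : 0 < δ₀) (hη : 0 < η)
    -- data: responses and mean functions g j i = g_j(X_i, ·), with their first two
    -- derivatives G, H and the bounds s, L₁, L₂ of Assumption A2
    (Y : ℕ → Fin b → ℝ)
    (g : Fin b → ℕ → EuclideanSpace ℝ (Fin p) → ℝ)
    (G : Fin b → ℕ → EuclideanSpace ℝ (Fin p) → EuclideanSpace ℝ (Fin p))
    (H : Fin b → ℕ → EuclideanSpace ℝ (Fin p) →
      (EuclideanSpace ℝ (Fin p) →L[ℝ] EuclideanSpace ℝ (Fin p)))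
    (s : ℕ → Fin b → ℝ)
    (hG : ∀ j i y, HasGradientAt (g j i) (G j i y) y)
    (hH : ∀ j i y, HasFDerivAt (G j i) (H j i y) y)
    (hs : ∀ i j, ∀ x ∈ closedBall β ε₁, ‖G j i x‖ ≤ s i j)
    (hsL₁ : ∀ i j, s i j ≤ L₁)
    (hL₂ : ∀ i j, ∀ x ∈ closedBall β ε₁, ‖H j i x‖ ≤ L₂)
    -- Assumption A1: classes I(j,k,l) indexed by r, with coordinates (jc r, kc r)
    (Icl : Fin R → Finset ℕ) (jc kc : Fin R → Fin b)
    (ridx : ℕ → Fin b → Fin b → Fin R)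
    (hne : ∀ r, (Icl r).Nonempty)
    (hmem : ∀ r, ∀ i ∈ Icl r, jc r ∈ J i ∧ kc r ∈ J i)
    (hridx : ∀ i < n, ∀ j ∈ J i, ∀ k ∈ J i,
      i ∈ Icl (ridx i j k) ∧ jc (ridx i j k) = j ∧ kc (ridx i j k) = k)
    -- the GEE-solution map β(·) with its derivative D (Assumption A4)
    (βmap : EuclideanSpace ℝ (Fin R) → EuclideanSpace ℝ (Fin p))
    (D : EuclideanSpace ℝ (Fin R) →
      (EuclideanSpace ℝ (Fin R) →L[ℝ] EuclideanSpace ℝ (Fin p)))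
    (hD : ∀ v, HasFDerivAt βmap (D v) v)
    -- (B2), in both coordinate orders
    (hB2 : ∀ r : Fin R,
      ((Icl r).card : ℝ)⁻¹ *
          ∑ i ∈ Icl r, (1 + s i (jc r)) * |Y i (kc r) - g (kc r) i β| ≤ (Real.sqrt ε₀)⁻¹ ∧
      ((Icl r).card : ℝ)⁻¹ *
          ∑ i ∈ Icl r, (1 + s i (kc r)) * |Y i (jc r) - g (jc r) i β| ≤ (Real.sqrt ε₀)⁻¹)
    -- (B3): sup_{v∈𝒱} ‖∂β/∂v‖ ≤ ε₀^{-1/4}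
    (hB3 : ∀ v, inVset J ridx n δ₀ M₀ v → ‖D v‖ ≤ (ε₀ ^ ((1 : ℝ) / 4))⁻¹)
    -- (B5), in both coordinate orders
    (hB5 : ∀ (r : Fin R) (q : Fin p),
      |((Icl r).card : ℝ)⁻¹ *
          ∑ i ∈ Icl r, (G (jc r) i β) q * (Y i (kc r) - g (kc r) i β)| ≤ Real.sqrt ε₀ ∧
      |((Icl r).card : ℝ)⁻¹ *
          ∑ i ∈ Icl r, (G (kc r) i β) q * (Y i (jc r) - g (jc r) i β)| ≤ Real.sqrt ε₀)
    -- (C2)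
    (hC2 : Real.sqrt ((R : ℝ) * (max R p : ℕ)) *
      (L₁ ^ 2 * ε₀ ^ ((3 : ℝ) / 4) + (L₂ + 1) * ε₀ ^ ((1 : ℝ) / 4)) ≤ η / 2) :
    -- |(∂τ/∂β_q)|_{β=β̂}| ≤ η whenever |β̂ − β| ≤ ε₀ (with v̂ = v(β̂) ∈ 𝒱)
    (∀ βh : EuclideanSpace ℝ (Fin p), ‖βh - β‖ ≤ ε₀ →
      inVset J ridx n δ₀ M₀ (momMap Y g Icl jc kc βh) →
      ∀ q : Fin p,
        ‖fderiv ℝ (fun x => βmap (momMap Y g Icl jc kc x)) βh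
          (EuclideanSpace.single q 1)‖ ≤ η) ∧
    -- |(∂ρ/∂v_r)|_{v=v̂}| ≤ η whenever v̂ ∈ 𝒱 (with β̂ = β(v̂) satisfying |β̂ − β| ≤ ε₀)
    (∀ vh : EuclideanSpace ℝ (Fin R), inVset J ridx n δ₀ M₀ vh →
      ‖βmap vh - β‖ ≤ ε₀ →
      ∀ r : Fin R,
        ‖fderiv ℝ (fun v => momMap Y g Icl jc kc (βmap v)) vh
          (EuclideanSpace.single r 1)‖ ≤ η) := by

  classical
  have hΦ : ∀ x, HasFDerivAt (momMap Y g Icl jc kc) (momDeriv Y g G Icl jc kc x) x :=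
    momMap_hasFDerivAt Y g G hG Icl jc kc
  have hβball : β ∈ closedBall β ε₁ := mem_closedBall_self (hε₀.le.trans hε₀₁)
  have hsnn : ∀ i j, 0 ≤ s i j := fun i j => (norm_nonneg _).trans (hs i j β hβball)
  set A₀ : ℝ := Real.sqrt p * Real.sqrt ε₀ + L₂ * Real.sqrt ε₀ + L₁ ^ 2 * ε₀ with hA₀
  -- (B2) with the (1+s) factor dropped, in both coordinate orders
  have hB2' : ∀ r : Fin R,
      ((Icl r).card : ℝ)⁻¹ * ∑ i ∈ Icl r, |Y i (kc r) - g (kc r) i β| ≤ (Real.sqrt ε₀)⁻¹ ∧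
      ((Icl r).card : ℝ)⁻¹ * ∑ i ∈ Icl r, |Y i (jc r) - g (jc r) i β| ≤ (Real.sqrt ε₀)⁻¹ := by
    intro r
    constructor
    · refine le_trans ?_ (hB2 r).1
      refine mul_le_mul_of_nonneg_left (Finset.sum_le_sum fun i _ => ?_) (by positivity)
      nlinarith [hsnn i (jc r), abs_nonneg (Y i (kc r) - g (kc r) i β)]
    · refine le_trans ?_ (hB2 r).2
      refine mul_le_mul_of_nonneg_left (Finset.sum_le_sum fun i _ => ?_) (by positivity)
      nlinarith [hsnn i (kc r), abs_nonneg (Y i (jc r) - g (jc r) i β)]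
  -- master bound on the derivative of the moment map
  have master : ∀ x : EuclideanSpace ℝ (Fin p), ‖x - β‖ ≤ ε₀ →
      ∀ u, ‖momDeriv Y g G Icl jc kc x u‖ ≤ (Real.sqrt R * (2 * A₀)) * ‖u‖ := by
    intro x hx u
    have comp : ∀ r : Fin R, |momDeriv Y g G Icl jc kc x u r| ≤ (2 * A₀) * ‖u‖ := by
      intro r
      have happ : momDeriv Y g G Icl jc kc x u r = ((Icl r).card : ℝ)⁻¹ *
          ∑ i ∈ Icl r, ((Y i (jc r) - g (jc r) i x) * -(inner ℝ (G (kc r) i x) u : ℝ) +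
            (Y i (kc r) - g (kc r) i x) * -(inner ℝ (G (jc r) i x) u : ℝ)) := by
        simp [momDeriv, ContinuousLinearMap.sum_apply, mul_add, Finset.mul_sum]
      have hsplit : momDeriv Y g G Icl jc kc x u r =
          -(((Icl r).card : ℝ)⁻¹ *
              ∑ i ∈ Icl r, (Y i (jc r) - g (jc r) i x) * (inner ℝ (G (kc r) i x) u : ℝ)) +
          -(((Icl r).card : ℝ)⁻¹ *
              ∑ i ∈ Icl r, (Y i (kc r) - g (kc r) i x) * (inner ℝ (G (jc r) i x) u : ℝ)) := by
        rw [happ, Finset.sum_add_distrib, mul_add]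
        simp [mul_neg, Finset.sum_neg_distrib]
      have hhalf1 : |((Icl r).card : ℝ)⁻¹ *
          ∑ i ∈ Icl r, (Y i (jc r) - g (jc r) i x) * (inner ℝ (G (kc r) i x) u : ℝ)| ≤ A₀ * ‖u‖ := by
        refine half_bound β x ε₀ ε₁ L₁ L₂ hε₀ hε₀₁ hx (Icl r) (hne r)
          (fun i => Y i (jc r)) (fun i => g (jc r) i) (fun i => G (jc r) i)
          (fun i => G (kc r) i) (fun i => H (kc r) i)
          (fun i y => hG (jc r) i y) (fun i y => hH (kc r) i y)
          (fun i y hy => (hs i (kc r) y hy).trans (hsL₁ i (kc r)))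
          (fun i y hy => (hs i (jc r) y hy).trans (hsL₁ i (jc r)))
          (fun i y hy => hL₂ i (kc r) y hy)
          (hB2' r).2 (fun q => (hB5 r q).2) u
      have hhalf2 : |((Icl r).card : ℝ)⁻¹ *
          ∑ i ∈ Icl r, (Y i (kc r) - g (kc r) i x) * (inner ℝ (G (jc r) i x) u : ℝ)| ≤ A₀ * ‖u‖ := by
        refine half_bound β x ε₀ ε₁ L₁ L₂ hε₀ hε₀₁ hx (Icl r) (hne r)
          (fun i => Y i (kc r)) (fun i => g (kc r) i) (fun i => G (kc r) i)
          (fun i => G (jc r) i) (fun i => H (jc r) i)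
          (fun i y => hG (kc r) i y) (fun i y => hH (jc r) i y)
          (fun i y hy => (hs i (jc r) y hy).trans (hsL₁ i (jc r)))
          (fun i y hy => (hs i (kc r) y hy).trans (hsL₁ i (kc r)))
          (fun i y hy => hL₂ i (jc r) y hy)
          (hB2' r).1 (fun q => (hB5 r q).1) u
      calc |momDeriv Y g G Icl jc kc x u r| ≤
            |(((Icl r).card : ℝ)⁻¹ *
              ∑ i ∈ Icl r, (Y i (jc r) - g (jc r) i x) * (inner ℝ (G (kc r) i x) u : ℝ))| +
            |(((Icl r).card : ℝ)⁻¹ *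
              ∑ i ∈ Icl r, (Y i (kc r) - g (kc r) i x) * (inner ℝ (G (jc r) i x) u : ℝ))| := by
              rw [hsplit]
              exact (abs_add_le _ _).trans (by rw [abs_neg, abs_neg])
        _ ≤ A₀ * ‖u‖ + A₀ * ‖u‖ := add_le_add hhalf1 hhalf2
        _ = (2 * A₀) * ‖u‖ := by ring
    have := euc_norm_le_sqrt_mul (momDeriv Y g G Icl jc kc x u) ((2 * A₀) * ‖u‖) comp
    calc ‖momDeriv Y g G Icl jc kc x u‖ ≤ Real.sqrt R * ((2 * A₀) * ‖u‖) := this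
      _ = (Real.sqrt R * (2 * A₀)) * ‖u‖ := by ring
  -- the final arithmetic bound, valid as soon as R ≥ 1
  have harith : 1 ≤ R → (ε₀ ^ ((1 : ℝ) / 4))⁻¹ * (Real.sqrt R * (2 * A₀)) ≤ η := by
    intro hR1
    have hr0 : Fin R := ⟨0, hR1⟩
    have hL₁0 : 0 ≤ L₁ := (hsnn 0 (jc hr0)).trans (hsL₁ 0 (jc hr0))
    have hL₂0 : 0 ≤ L₂ := (norm_nonneg _).trans (hL₂ 0 (jc hr0) β hβball)
    exact JLW_arith ε₀ L₁ L₂ η R p hε₀ hL₁0 hL₂0 hR1 hC2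
  constructor
  · intro βh hβh hV q
    have hcomp : HasFDerivAt (fun x => βmap (momMap Y g Icl jc kc x))
        ((D (momMap Y g Icl jc kc βh)).comp (momDeriv Y g G Icl jc kc βh)) βh :=
      (hD (momMap Y g Icl jc kc βh)).comp βh (hΦ βh)
    rw [hcomp.fderiv, ContinuousLinearMap.comp_apply]
    have hnu : ‖momDeriv Y g G Icl jc kc βh (EuclideanSpace.single q 1)‖ ≤
        Real.sqrt R * (2 * A₀) := by
      have := master βh hβh (EuclideanSpace.single q 1)
      rwa [EuclideanSpace.norm_single, norm_one, mul_one] at this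
    calc ‖D (momMap Y g Icl jc kc βh) (momDeriv Y g G Icl jc kc βh (EuclideanSpace.single q 1))‖
        ≤ ‖D (momMap Y g Icl jc kc βh)‖ *
          ‖momDeriv Y g G Icl jc kc βh (EuclideanSpace.single q 1)‖ :=
          ContinuousLinearMap.le_opNorm _ _
      _ ≤ (ε₀ ^ ((1 : ℝ) / 4))⁻¹ * (Real.sqrt R * (2 * A₀)) :=
          mul_le_mul (hB3 _ hV) hnu (norm_nonneg _) (by positivity)
      _ ≤ η := by
          rcases Nat.eq_zero_or_pos R with hR0 | hR1
          · subst hR0; simp; positivity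
          · exact harith hR1
  · intro vh hV hβh r
    have hR1 : 1 ≤ R := r.pos
    have hL₂0 : 0 ≤ L₂ := (norm_nonneg _).trans (hL₂ 0 (jc r) β hβball)
    have hA₀0 : 0 ≤ A₀ := by rw [hA₀]; positivity
    have hcomp : HasFDerivAt (fun v => momMap Y g Icl jc kc (βmap v))
        ((momDeriv Y g G Icl jc kc (βmap vh)).comp (D vh)) vh :=
      (hΦ (βmap vh)).comp vh (hD vh)
    rw [hcomp.fderiv, ContinuousLinearMap.comp_apply]
    have hu : ‖D vh (EuclideanSpace.single r 1)‖ ≤ (ε₀ ^ ((1 : ℝ) / 4))⁻¹ := by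
      calc ‖D vh (EuclideanSpace.single r 1)‖ ≤ ‖D vh‖ * ‖EuclideanSpace.single r 1‖ :=
            ContinuousLinearMap.le_opNorm _ _
        _ = ‖D vh‖ := by rw [EuclideanSpace.norm_single, norm_one, mul_one]
        _ ≤ (ε₀ ^ ((1 : ℝ) / 4))⁻¹ := hB3 vh hV
    calc ‖momDeriv Y g G Icl jc kc (βmap vh) (D vh (EuclideanSpace.single r 1))‖
        ≤ (Real.sqrt R * (2 * A₀)) * ‖D vh (EuclideanSpace.single r 1)‖ :=
          master (βmap vh) hβh _
      _ ≤ (Real.sqrt R * (2 * A₀)) * (ε₀ ^ ((1 : ℝ) / 4))⁻¹ :=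
          mul_le_mul_of_nonneg_left hu (by positivity)
      _ = (ε₀ ^ ((1 : ℝ) / 4))⁻¹ * (Real.sqrt R * (2 * A₀)) := by ring
      _ ≤ η := harith hR1
end
end

section
/- Entrywise perturbation bound for the MoM estimator (core estimate of Lemma 4). Let I be a finite index set of cardinality N ≥ 1, let g_j(X_i, ·), g_k(X_i, ·) be differentiable functions of β̃ ∈ ℝ^p on the ball {|β̃ − β| ≤ ε0} with s_{ij} := sup_{|β̃−β|≤ε0} |(∂/∂β)g_j(X_i,β̃)| ≤ L1 and s_{ik} ≤ L1 for all i ∈ I, and write μ_{ij} = g_j(X_i,β), μ_{ik} = g_k(X_i,β). Suppose N^{-1} Σ_{i∈I} (1 + s_{ij}) |Y_{ik} − μ_{ik}| ≤ ε0^{-1/2} and N^{-1} Σ_{i∈I} (1 + s_{ik}) |Y_{ij} − μ_{ij}| ≤ ε0^{-1/2}. Then for any β̂ with |β̂ − β| ≤ ε0, | N^{-1} Σ_{i∈I} (Y_{ij} − g_j(X_i,β̂))(Y_{ik} − g_k(X_i,β̂)) − N^{-1} Σ_{i∈I} (Y_{ij} − μ_{ij})(Y_{ik} − μ_{ik}) |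 ≤ 2ε0^{1/2} + L1² ε0². -/
open Metric

/-!
Entrywise perturbation bound for the method of moments estimator (core estimate of Lemma 4
of Jiang–Luan–Wang).

If the gradients of `g_j(X_i, ·)`, `g_k(X_i, ·)` on the ball `{|β̃ − β| ≤ ε₀}` are bounded by
`s_{ij}, s_{ik} ≤ L₁` and the averages `N⁻¹ Σ_{i∈I} (1+s_{ij})|Y_{ik} − μ_{ik}|` and
`N⁻¹ Σ_{i∈I} (1+s_{ik})|Y_{ij} − μ_{ij}|` are at most `ε₀^{-1/2}`, then for any `βh` with
`|βh − β| ≤ ε₀`, the (j,k) entry of the MoM covariance estimator computed at `βh` differs from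
the one computed at `β` by at most `2ε₀^{1/2} + L₁²ε₀²`.
-/

theorem mom_entrywise_perturbation_bound
    {ι : Type*} {p : ℕ} (I : Finset ι) (hI : I.Nonempty)
    (β : EuclideanSpace ℝ (Fin p)) (ε₀ L₁ : ℝ) (hε₀ : 0 < ε₀)
    (gj gk : ι → EuclideanSpace ℝ (Fin p) → ℝ)
    (Dj Dk : ι → EuclideanSpace ℝ (Fin p) → (EuclideanSpace ℝ (Fin p) →L[ℝ] ℝ))
    (sj sk : ι → ℝ)
    (Yj Yk : ι → ℝ)
    -- differentiability on the ball with gradient norm bounds s_{ij}, s_{ik} ≤ L₁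
    (hdj : ∀ i ∈ I, ∀ x ∈ closedBall β ε₀, HasFDerivAt (gj i) (Dj i x) x)
    (hdk : ∀ i ∈ I, ∀ x ∈ closedBall β ε₀, HasFDerivAt (gk i) (Dk i x) x)
    (hsj : ∀ i ∈ I, ∀ x ∈ closedBall β ε₀, ‖Dj i x‖ ≤ sj i)
    (hsk : ∀ i ∈ I, ∀ x ∈ closedBall β ε₀, ‖Dk i x‖ ≤ sk i)
    (hsjL : ∀ i ∈ I, sj i ≤ L₁) (hskL : ∀ i ∈ I, sk i ≤ L₁)
    -- the assumed average bounds
    (havg₁ : (I.card : ℝ)⁻¹ * ∑ i ∈ I, (1 + sj i) * |Yk i - gk i β| ≤ (Real.sqrt ε₀)⁻¹)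
    (havg₂ : (I.card : ℝ)⁻¹ * ∑ i ∈ I, (1 + sk i) * |Yj i - gj i β| ≤ (Real.sqrt ε₀)⁻¹) :
    ∀ βh : EuclideanSpace ℝ (Fin p), ‖βh - β‖ ≤ ε₀ →
      |(I.card : ℝ)⁻¹ * ∑ i ∈ I, (Yj i - gj i βh) * (Yk i - gk i βh) -
        (I.card : ℝ)⁻¹ * ∑ i ∈ I, (Yj i - gj i β) * (Yk i - gk i β)|
        ≤ 2 * Real.sqrt ε₀ + L₁ ^ 2 * ε₀ ^ 2 := by

  intro βh hβh
  have hβmem : β ∈ closedBall β ε₀ := mem_closedBall_self hε₀.le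
  have hβhmem : βh ∈ closedBall β ε₀ := by
    simpa [mem_closedBall, dist_eq_norm] using hβh
  obtain ⟨i₀, hi₀⟩ := hI
  have hL₁ : 0 ≤ L₁ := le_trans (le_trans (norm_nonneg _) (hsj i₀ hi₀ β hβmem)) (hsjL i₀ hi₀)
  have hsj0 : ∀ i ∈ I, 0 ≤ sj i := fun i hi => (norm_nonneg _).trans (hsj i hi β hβmem)
  have hsk0 : ∀ i ∈ I, 0 ≤ sk i := fun i hi => (norm_nonneg _).trans (hsk i hi β hβmem)
  have hδj : ∀ i ∈ I, |gj i βh - gj i β| ≤ sj i * ε₀ := by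
    intro i hi
    have h := (convex_closedBall β ε₀).norm_image_sub_le_of_norm_hasFDerivWithin_le
      (fun x hx => (hdj i hi x hx).hasFDerivWithinAt) (fun x hx => hsj i hi x hx) hβmem hβhmem
    rw [Real.norm_eq_abs] at h
    exact h.trans (mul_le_mul_of_nonneg_left hβh (hsj0 i hi))
  have hδk : ∀ i ∈ I, |gk i βh - gk i β| ≤ sk i * ε₀ := by
    intro i hi
    have h := (convex_closedBall β ε₀).norm_image_sub_le_of_norm_hasFDerivWithin_le
      (fun x hx => (hdk i hi x hx).hasFDerivWithinAt) (fun x hx => hsk i hi x hx) hβmem hβhmem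
    rw [Real.norm_eq_abs] at h
    exact h.trans (mul_le_mul_of_nonneg_left hβh (hsk0 i hi))
  have hN : (0:ℝ) < (I.card : ℝ) := by
    exact_mod_cast Finset.card_pos.mpr ⟨i₀, hi₀⟩
  have hNinv : (0:ℝ) ≤ (I.card : ℝ)⁻¹ := by positivity
  -- per-term bound
  have hterm : ∀ i ∈ I,
      |(Yj i - gj i βh) * (Yk i - gk i βh) - (Yj i - gj i β) * (Yk i - gk i β)|
        ≤ sj i * ε₀ * |Yk i - gk i β| + sk i * ε₀ * |Yj i - gj i β| + L₁ ^ 2 * ε₀ ^ 2 := by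
    intro i hi
    set a := Yj i - gj i β with ha
    set b := Yk i - gk i β with hb
    set dj := gj i βh - gj i β with hdj'
    set dk := gk i βh - gk i β with hdk'
    have heq : (Yj i - gj i βh) * (Yk i - gk i βh) - a * b
        = -(dj * b) - a * dk + dj * dk := by ring
    rw [heq]
    have h1 : |(-(dj * b) - a * dk) + dj * dk| ≤ |dj * b| + |a * dk| + |dj * dk| := by
      calc |(-(dj * b) - a * dk) + dj * dk| ≤ |(-(dj * b) - a * dk)| + |dj * dk| := abs_add_le _ _
        _ ≤ (|(-(dj * b))| + |a * dk|) + |dj * dk| := by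
            exact add_le_add_left (abs_sub _ _) _
        _ = |dj * b| + |a * dk| + |dj * dk| := by rw [abs_neg]
    refine h1.trans ?_
    rw [abs_mul, abs_mul, abs_mul]
    have hdjL : |dj| ≤ L₁ * ε₀ :=
      (hδj i hi).trans (mul_le_mul_of_nonneg_right (hsjL i hi) hε₀.le)
    have hdkL : |dk| ≤ L₁ * ε₀ :=
      (hδk i hi).trans (mul_le_mul_of_nonneg_right (hskL i hi) hε₀.le)
    have t1 : |dj| * |b| ≤ sj i * ε₀ * |b| :=
      mul_le_mul_of_nonneg_right (hδj i hi) (abs_nonneg _)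
    have t2 : |a| * |dk| ≤ sk i * ε₀ * |a| := by
      rw [mul_comm]
      exact mul_le_mul_of_nonneg_right (hδk i hi) (abs_nonneg _)
    have t3 : |dj| * |dk| ≤ L₁ ^ 2 * ε₀ ^ 2 := by
      have := mul_le_mul hdjL hdkL (abs_nonneg _) (by positivity)
      calc |dj| * |dk| ≤ (L₁ * ε₀) * (L₁ * ε₀) := this
        _ = L₁ ^ 2 * ε₀ ^ 2 := by ring
    linarith
  -- sum the bounds
  have hsum : |∑ i ∈ I, ((Yj i - gj i βh) * (Yk i - gk i βh)
        - (Yj i - gj i β) * (Yk i - gk i β))|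
      ≤ ∑ i ∈ I, (sj i * ε₀ * |Yk i - gk i β| + sk i * ε₀ * |Yj i - gj i β| + L₁ ^ 2 * ε₀ ^ 2) :=
    (Finset.abs_sum_le_sum_abs _ _).trans (Finset.sum_le_sum hterm)
  have hmain : |(I.card : ℝ)⁻¹ * ∑ i ∈ I, (Yj i - gj i βh) * (Yk i - gk i βh) -
        (I.card : ℝ)⁻¹ * ∑ i ∈ I, (Yj i - gj i β) * (Yk i - gk i β)|
      ≤ (I.card : ℝ)⁻¹ * ∑ i ∈ I,
          (sj i * ε₀ * |Yk i - gk i β| + sk i * ε₀ * |Yj i - gj i β| + L₁ ^ 2 * ε₀ ^ 2) := by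
    rw [← mul_sub, ← Finset.sum_sub_distrib, abs_mul, abs_of_nonneg hNinv]
    exact mul_le_mul_of_nonneg_left hsum hNinv
  refine hmain.trans ?_
  rw [Finset.sum_add_distrib, Finset.sum_add_distrib, Finset.sum_const, nsmul_eq_mul]
  have hsplit : (I.card : ℝ)⁻¹ * ((∑ i ∈ I, sj i * ε₀ * |Yk i - gk i β|
        + ∑ i ∈ I, sk i * ε₀ * |Yj i - gj i β|) + (I.card : ℝ) * (L₁ ^ 2 * ε₀ ^ 2))
      = ε₀ * ((I.card : ℝ)⁻¹ * ∑ i ∈ I, sj i * |Yk i - gk i β|)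
        + ε₀ * ((I.card : ℝ)⁻¹ * ∑ i ∈ I, sk i * |Yj i - gj i β|)
        + L₁ ^ 2 * ε₀ ^ 2 := by
    have e1 : ∑ i ∈ I, sj i * ε₀ * |Yk i - gk i β| = ε₀ * ∑ i ∈ I, sj i * |Yk i - gk i β| := by
      rw [Finset.mul_sum]; exact Finset.sum_congr rfl fun i _ => by ring
    have e2 : ∑ i ∈ I, sk i * ε₀ * |Yj i - gj i β| = ε₀ * ∑ i ∈ I, sk i * |Yj i - gj i β| := by
      rw [Finset.mul_sum]; exact Finset.sum_congr rfl fun i _ => by ring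
    rw [e1, e2, mul_add, mul_add, ← mul_assoc ((I.card : ℝ)⁻¹) ((I.card : ℝ)) _,
      inv_mul_cancel₀ hN.ne', one_mul]
    ring
  rw [hsplit]
  have hsq : 0 < Real.sqrt ε₀ := Real.sqrt_pos.mpr hε₀
  have hεsq : ε₀ * (Real.sqrt ε₀)⁻¹ = Real.sqrt ε₀ := by
    rw [← Real.mul_self_sqrt hε₀.le]
    field_simp
    rw [Real.sqrt_sq hsq.le]
  have hb1 : (I.card : ℝ)⁻¹ * ∑ i ∈ I, sj i * |Yk i - gk i β| ≤ (Real.sqrt ε₀)⁻¹ := by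
    refine le_trans ?_ havg₁
    refine mul_le_mul_of_nonneg_left (Finset.sum_le_sum fun i hi => ?_) hNinv
    have : sj i ≤ 1 + sj i := by linarith
    exact mul_le_mul_of_nonneg_right this (abs_nonneg _)
  have hb2 : (I.card : ℝ)⁻¹ * ∑ i ∈ I, sk i * |Yj i - gj i β| ≤ (Real.sqrt ε₀)⁻¹ := by
    refine le_trans ?_ havg₂
    refine mul_le_mul_of_nonneg_left (Finset.sum_le_sum fun i hi => ?_) hNinv
    have : sk i ≤ 1 + sk i := by linarith
    exact mul_le_mul_of_nonneg_right this (abs_nonneg _)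
  have c1 : ε₀ * ((I.card : ℝ)⁻¹ * ∑ i ∈ I, sj i * |Yk i - gk i β|) ≤ Real.sqrt ε₀ := by
    calc ε₀ * ((I.card : ℝ)⁻¹ * ∑ i ∈ I, sj i * |Yk i - gk i β|)
        ≤ ε₀ * (Real.sqrt ε₀)⁻¹ := mul_le_mul_of_nonneg_left hb1 hε₀.le
      _ = Real.sqrt ε₀ := hεsq
  have c2 : ε₀ * ((I.card : ℝ)⁻¹ * ∑ i ∈ I, sk i * |Yj i - gj i β|) ≤ Real.sqrt ε₀ := by
    calc ε₀ * ((I.card : ℝ)⁻¹ * ∑ i ∈ I, sk i * |Yj i - gj i β|)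
        ≤ ε₀ * (Real.sqrt ε₀)⁻¹ := mul_le_mul_of_nonneg_left hb2 hε₀.le
      _ = Real.sqrt ε₀ := hεsq
  linarith
end

section
/- Bound on the derivative of the MoM map (core estimate of Lemma 6). Let I be a finite index set of cardinality N ≥ 1 and fix 1 ≤ q ≤ p and 0 < ε0 ≤ ε1. Suppose g_j(X_i,·), g_k(X_i,·) are twice continuously differentiable on {|β̃ − β| ≤ ε1} with sup_{|β̃−β|≤ε1} |(∂/∂β)g_j(X_i,β̃)| ≤ L1 (and likewise for g_k) and sup_{|β̃−β|≤ε1} ‖(∂²/∂β∂β')g_j(X_i,β̃)‖ ≤ L2, that N^{-1} Σ_{i∈I} (1 + s_{ij}) |Y_{ik} − μ_{ik}| ≤ ε0^{-1/2}, and that | N^{-1} Σ_{i∈I} (∂μ_{ij}/∂β_q)(Y_{ik} − μ_{ik}) | ≤ ε0^{1/2}, where μ_{ij} = g_j(X_i,β), μ_{ik} = g_k(X_i,β) and s_{ij} := sup_{|β̃−β|≤ε1} |(∂/∂β)g_j(X_i,β̃)|. Then for any β̂ with |β̂ − β| ≤ ε0, | N^{-1} Σ_{i∈I} (∂g_j/∂β_q)(X_i,β̂)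 · (Y_{ik} − g_k(X_i,β̂)) | ≤ L1² ε0 + (L2 + 1) ε0^{1/2}. -/
open Metric

/-!
Bound on the derivative of the method of moments map (core estimate of Lemma 6 of
Jiang–Luan–Wang): the term
`I₁ = N⁻¹ Σ_{i∈I} (∂g_j/∂β_q)(X_i, β̂) · (Y_{ik} − g_k(X_i, β̂))`
in the decomposition of `∂v̂(j,k,l)/∂β_q` satisfies `|I₁| ≤ L₁² ε₀ + (L₂ + 1) ε₀^{1/2}`
whenever `|β̂ − β| ≤ ε₀`.
-/

private lemma coord_abs_le_norm {p : ℕ} (v : EuclideanSpace ℝ (Fin p)) (q : Fin p) :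
    |v q| ≤ ‖v‖ := by
  rw [EuclideanSpace.norm_eq, ← Real.sqrt_sq_eq_abs]
  apply Real.sqrt_le_sqrt
  have := Finset.single_le_sum (f := fun i => ‖v i‖ ^ 2)
    (fun i _ => sq_nonneg _) (Finset.mem_univ q)
  simpa [Real.norm_eq_abs, sq_abs] using this

theorem mom_map_derivative_bound
    {ι : Type*} {p : ℕ} (I : Finset ι) (hI : I.Nonempty) (q : Fin p)
    (β : EuclideanSpace ℝ (Fin p)) (ε₀ ε₁ L₁ L₂ : ℝ)
    (hε₀ : 0 < ε₀) (hε₀₁ : ε₀ ≤ ε₁)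
    (gj gk : ι → EuclideanSpace ℝ (Fin p) → ℝ)
    -- gradients of g_j(X_i,·), g_k(X_i,·)
    (Gj Gk : ι → EuclideanSpace ℝ (Fin p) → EuclideanSpace ℝ (Fin p))
    -- second derivative of g_j(X_i,·) (derivative of the gradient)
    (Hj : ι → EuclideanSpace ℝ (Fin p) →
      (EuclideanSpace ℝ (Fin p) →L[ℝ] EuclideanSpace ℝ (Fin p)))
    (sj : ι → ℝ)
    (Yj Yk : ι → ℝ)
    (hGj : ∀ i ∈ I, ∀ x ∈ closedBall β ε₁, HasGradientAt (gj i) (Gj i x) x)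
    (hGk : ∀ i ∈ I, ∀ x ∈ closedBall β ε₁, HasGradientAt (gk i) (Gk i x) x)
    (hHj : ∀ i ∈ I, ∀ x ∈ closedBall β ε₁, HasFDerivAt (Gj i) (Hj i x) x)
    -- first-derivative bounds: s_{ij} ≤ L₁ (and likewise for g_k)
    (hsj : ∀ i ∈ I, ∀ x ∈ closedBall β ε₁, ‖Gj i x‖ ≤ sj i)
    (hsjL : ∀ i ∈ I, sj i ≤ L₁)
    (hskL : ∀ i ∈ I, ∀ x ∈ closedBall β ε₁, ‖Gk i x‖ ≤ L₁)
    -- second-derivative bound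
    (hL₂ : ∀ i ∈ I, ∀ x ∈ closedBall β ε₁, ‖Hj i x‖ ≤ L₂)
    -- assumed average bounds (events B2 and B5)
    (havg : (I.card : ℝ)⁻¹ * ∑ i ∈ I, (1 + sj i) * |Yk i - gk i β| ≤ (Real.sqrt ε₀)⁻¹)
    (hB5 : |(I.card : ℝ)⁻¹ * ∑ i ∈ I, (Gj i β) q * (Yk i - gk i β)| ≤ Real.sqrt ε₀) :
    ∀ βh : EuclideanSpace ℝ (Fin p), ‖βh - β‖ ≤ ε₀ →
      |(I.card : ℝ)⁻¹ * ∑ i ∈ I, (Gj i βh) q * (Yk i - gk i βh)|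
        ≤ L₁ ^ 2 * ε₀ + (L₂ + 1) * Real.sqrt ε₀ := by
  intro βh hβh
  have hcard : (0 : ℝ) < I.card := by exact_mod_cast Finset.card_pos.mpr hI
  have hNpos : (0 : ℝ) < (I.card : ℝ)⁻¹ := inv_pos.mpr hcard
  have hβmem : β ∈ closedBall β ε₁ := mem_closedBall_self (le_of_lt (lt_of_lt_of_le hε₀ hε₀₁))
  have hβhmem : βh ∈ closedBall β ε₁ := by
    rw [mem_closedBall_iff_norm]
    exact hβh.trans hε₀₁
  have hsqrt : (0 : ℝ) < Real.sqrt ε₀ := Real.sqrt_pos.mpr hε₀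
  have hε₀eq : Real.sqrt ε₀ * Real.sqrt ε₀ = ε₀ := Real.mul_self_sqrt hε₀.le
  -- nonnegativity facts
  have hsj0 : ∀ i ∈ I, 0 ≤ sj i := fun i hi => (norm_nonneg _).trans (hsj i hi β hβmem)
  obtain ⟨i₀, hi₀⟩ := hI
  have hL₁0 : 0 ≤ L₁ := (hsj0 i₀ hi₀).trans (hsjL i₀ hi₀)
  have hL₂0 : 0 ≤ L₂ := (norm_nonneg _).trans (hL₂ i₀ hi₀ β hβmem)
  -- mean value bounds
  have hGjlip : ∀ i ∈ I, ‖Gj i βh - Gj i β‖ ≤ L₂ * ε₀ := by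
    intro i hi
    have := (convex_closedBall β ε₁).norm_image_sub_le_of_norm_hasFDerivWithin_le
      (f := Gj i) (f' := Hj i)
      (fun x hx => (hHj i hi x hx).hasFDerivWithinAt)
      (fun x hx => hL₂ i hi x hx) hβmem hβhmem
    exact this.trans (mul_le_mul_of_nonneg_left hβh hL₂0)
  have hgklip : ∀ i ∈ I, |gk i β - gk i βh| ≤ L₁ * ε₀ := by
    intro i hi
    have := (convex_closedBall β ε₁).norm_image_sub_le_of_norm_hasFDerivWithin_le
      (f := gk i) (f' := fun x => (InnerProductSpace.toDual ℝ _) (Gk i x))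
      (fun x hx => ((hGk i hi x hx).hasFDerivAt).hasFDerivWithinAt)
      (fun x hx => by
        rw [(InnerProductSpace.toDual ℝ _).norm_map]
        exact hskL i hi x hx) hβhmem hβmem
    calc |gk i β - gk i βh| = ‖gk i β - gk i βh‖ := (Real.norm_eq_abs _).symm
      _ ≤ L₁ * ‖β - βh‖ := this
      _ ≤ L₁ * ε₀ := by
        rw [norm_sub_rev]
        exact mul_le_mul_of_nonneg_left hβh hL₁0
  -- decomposition
  set N : ℝ := (I.card : ℝ)⁻¹ with hN
  have hdecomp : N * ∑ i ∈ I, (Gj i βh) q * (Yk i - gk i βh)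
      = N * ∑ i ∈ I, (Gj i β) q * (Yk i - gk i β)
      + N * ∑ i ∈ I, (Gj i βh q - Gj i β q) * (Yk i - gk i β)
      + N * ∑ i ∈ I, (Gj i βh) q * (gk i β - gk i βh) := by
    rw [← mul_add, ← mul_add, ← Finset.sum_add_distrib, ← Finset.sum_add_distrib]
    congr 1
    apply Finset.sum_congr rfl
    intro i _
    ring
  rw [hdecomp]
  -- bound second term
  have hI12 : |N * ∑ i ∈ I, (Gj i βh q - Gj i β q) * (Yk i - gk i β)| ≤ L₂ * Real.sqrt ε₀ := by
    have hterm : ∀ i ∈ I, |(Gj i βh q - Gj i β q) * (Yk i - gk i β)|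
        ≤ (L₂ * ε₀) * ((1 + sj i) * |Yk i - gk i β|) := by
      intro i hi
      rw [abs_mul]
      have h1 : |Gj i βh q - Gj i β q| ≤ L₂ * ε₀ := by
        have := coord_abs_le_norm (Gj i βh - Gj i β) q
        simp only [PiLp.sub_apply] at this
        exact this.trans (hGjlip i hi)
      have h2 : |Yk i - gk i β| ≤ (1 + sj i) * |Yk i - gk i β| := by
        nlinarith [abs_nonneg (Yk i - gk i β), hsj0 i hi]
      calc |Gj i βh q - Gj i β q| * |Yk i - gk i β|
          ≤ (L₂ * ε₀) * |Yk i - gk i β| :=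
            mul_le_mul_of_nonneg_right h1 (abs_nonneg _)
        _ ≤ (L₂ * ε₀) * ((1 + sj i) * |Yk i - gk i β|) :=
            mul_le_mul_of_nonneg_left h2 (by positivity)
    calc |N * ∑ i ∈ I, (Gj i βh q - Gj i β q) * (Yk i - gk i β)|
        ≤ N * ∑ i ∈ I, |(Gj i βh q - Gj i β q) * (Yk i - gk i β)| := by
          rw [abs_mul, abs_of_pos hNpos]
          exact mul_le_mul_of_nonneg_left (Finset.abs_sum_le_sum_abs _ _) hNpos.le
      _ ≤ N * ∑ i ∈ I, (L₂ * ε₀) * ((1 + sj i) * |Yk i - gk i β|) :=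
          mul_le_mul_of_nonneg_left (Finset.sum_le_sum hterm) hNpos.le
      _ = (L₂ * ε₀) * (N * ∑ i ∈ I, (1 + sj i) * |Yk i - gk i β|) := by
          rw [← Finset.mul_sum]; ring
      _ ≤ (L₂ * ε₀) * (Real.sqrt ε₀)⁻¹ :=
          mul_le_mul_of_nonneg_left havg (by positivity)
      _ = L₂ * Real.sqrt ε₀ := by
          field_simp
          rw [sq, hε₀eq]
  -- bound third term
  have hI13 : |N * ∑ i ∈ I, (Gj i βh) q * (gk i β - gk i βh)| ≤ L₁ ^ 2 * ε₀ := by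
    have hterm : ∀ i ∈ I, |(Gj i βh) q * (gk i β - gk i βh)| ≤ L₁ * (L₁ * ε₀) := by
      intro i hi
      rw [abs_mul]
      have h1 : |(Gj i βh) q| ≤ L₁ :=
        (coord_abs_le_norm (Gj i βh) q).trans ((hsj i hi βh hβhmem).trans (hsjL i hi))
      exact mul_le_mul h1 (hgklip i hi) (abs_nonneg _) hL₁0
    calc |N * ∑ i ∈ I, (Gj i βh) q * (gk i β - gk i βh)|
        ≤ N * ∑ i ∈ I, |(Gj i βh) q * (gk i β - gk i βh)| := by
          rw [abs_mul, abs_of_pos hNpos]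
          exact mul_le_mul_of_nonneg_left (Finset.abs_sum_le_sum_abs _ _) hNpos.le
      _ ≤ N * ∑ i ∈ I, L₁ * (L₁ * ε₀) :=
          mul_le_mul_of_nonneg_left (Finset.sum_le_sum hterm) hNpos.le
      _ = L₁ ^ 2 * ε₀ := by
          rw [Finset.sum_const, nsmul_eq_mul, hN]
          field_simp
  calc |N * ∑ i ∈ I, (Gj i β) q * (Yk i - gk i β)
      + N * ∑ i ∈ I, (Gj i βh q - Gj i β q) * (Yk i - gk i β)
      + N * ∑ i ∈ I, (Gj i βh) q * (gk i β - gk i βh)|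
      ≤ |N * ∑ i ∈ I, (Gj i β) q * (Yk i - gk i β)|
      + |N * ∑ i ∈ I, (Gj i βh q - Gj i β q) * (Yk i - gk i β)|
      + |N * ∑ i ∈ I, (Gj i βh) q * (gk i β - gk i βh)| := abs_add_three _ _ _
    _ ≤ Real.sqrt ε₀ + L₂ * Real.sqrt ε₀ + L₁ ^ 2 * ε₀ :=
        add_le_add (add_le_add hB5 hI12) hI13
    _ = L₁ ^ 2 * ε₀ + (L₂ + 1) * Real.sqrt ε₀ := by ring
end
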